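/- For all linear characters φ, φ' of U and all linear characters ν, ν' of Z, one has ⟨Ind_{ZU}^G(ν⊗φ), Ind_{ZU}^G(ν⊗φ')⟩_G = ⟨Ind_{ZU}^G(ν'⊗φ), Ind_{ZU}^G(ν'⊗φ')⟩_G; that is, the inner product ⟨Ind_{ZU}^G(ν⊗φ), Ind_{ZU}^G(ν⊗φ')⟩_G does not depend on the linear character ν of Z. -/

import Mathlib

open scoped Classical

/-- The linear character of a subgroup `H` of `G`, extended by zero to a function on `G`. -/
noncomputable def extChar {G : Type*} [Group G] (H : Subgroup G) (φ : H →* ℂ) : G → ℂ :=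
  fun g => if h : g ∈ H then φ ⟨g, h⟩ else 0

/-- The linear character `ν ⊗ φ` of the subgroup `ZU`, extended by zero to `G`:
its value at `g = z * u` (with `z ∈ Z`, `u ∈ U`) is `ν z * φ u`, and it vanishes off `ZU`. -/
noncomputable def tensorChar {G : Type*} [Group G] [Fintype G] (Z U : Subgroup G)
    (ν : Z →* ℂ) (φ : U →* ℂ) : G → ℂ :=
  fun g => ∑ z : Z, ∑ u : U, if (z : G) * (u : G) = g then ν z * φ u else 0

/-- Induction to `G` of a class function of the subgroup `H`, extended by zero to `G`. -/
noncomputable def indChar {G : Type*} [Group G] [Fintype G] (H : Subgroup G)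
    (f : G → ℂ) : G → ℂ :=
  fun g => (Fintype.card H : ℂ)⁻¹ * ∑ x : G, f (x * g * x⁻¹)

/-- The inner product `⟨α, β⟩_H = |H|⁻¹ * Σ_{x ∈ H} α x * conj (β x)` of (the restrictions to
the subgroup `H` of) two functions `α β : G → ℂ`. -/
noncomputable def innerSub {G : Type*} [Group G] [Fintype G] (H : Subgroup G)
    (α β : G → ℂ) : ℂ :=
  (Fintype.card H : ℂ)⁻¹ * ∑ x : H, α x * (starRingEnd ℂ) (β x)

section AuxLemmas

variable {G : Type*} [Group G] [Fintype G] (Z U : Subgroup G)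

lemma conj_mul_self_of_pow_eq_one {w : ℂ} {n : ℕ} (hn : n ≠ 0) (h : w ^ n = 1) :
    w * (starRingEnd ℂ) w = 1 := by
  have h1 : ‖w‖₊ ^ n = 1 := by rw [← nnnorm_pow, h, nnnorm_one]
  have h2 : ‖w‖₊ = 1 := (pow_eq_one_iff_of_nonneg zero_le hn).mp h1
  have h3 : ‖w‖ = 1 := by
    rw [← coe_nnnorm, h2, NNReal.coe_one]
  rw [Complex.mul_conj, ← Complex.sq_norm, h3]
  norm_num

lemma char_mul_conj (ν : Z →* ℂ) (z : Z) : ν z * (starRingEnd ℂ) (ν z) = 1 := by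
  apply conj_mul_self_of_pow_eq_one (n := Fintype.card Z) Fintype.card_ne_zero
  rw [← map_pow, pow_card_eq_one, map_one]

lemma tensorChar_apply (hZU : Z ⊓ U = ⊥) (ν : Z →* ℂ) (φ : U →* ℂ) (z : Z) (u : U) :
    tensorChar Z U ν φ ((z : G) * u) = ν z * φ u := by
  unfold tensorChar
  rw [Fintype.sum_eq_single z, Fintype.sum_eq_single u, if_pos rfl]
  · intro u' hu'
    rw [if_neg]
    intro h
    exact hu' (Subtype.ext (mul_left_cancel h))
  · intro z' hz'
    apply Finset.sum_eq_zero
    intro u' _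
    rw [if_neg]
    intro h
    have hg : (z : G)⁻¹ * z' = (u : G) * (u' : G)⁻¹ := by
      rw [inv_mul_eq_iff_eq_mul, ← mul_assoc, ← h, mul_inv_cancel_right]
    have hmem : ((z : G)⁻¹ * z') ∈ Z ⊓ U := by
      rw [Subgroup.mem_inf]
      refine ⟨Z.mul_mem (Z.inv_mem z.2) z'.2, ?_⟩
      rw [hg]
      exact U.mul_mem u.2 (U.inv_mem u'.2)
    rw [hZU, Subgroup.mem_bot] at hmem
    exact hz' (Subtype.ext (inv_mul_eq_one.mp hmem).symm)

lemma tensorChar_eq_zero (ν : Z →* ℂ) (φ : U →* ℂ) {g : G}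
    (h : ¬ ∃ (z : Z) (u : U), (z : G) * u = g) : tensorChar Z U ν φ g = 0 := by
  unfold tensorChar
  apply Finset.sum_eq_zero
  intro z _
  apply Finset.sum_eq_zero
  intro u _
  rw [if_neg]
  intro he
  exact h ⟨z, u, he⟩

lemma tensorChar_smul (ν : Z →* ℂ) (φ : U →* ℂ) (z : Z) (g : G) :
    tensorChar Z U ν φ ((z : G) * g) = ν z * tensorChar Z U ν φ g := by
  unfold tensorChar
  rw [Finset.mul_sum]
  refine (Fintype.sum_equiv (Equiv.mulLeft z) _ _ ?_).symm
  intro z'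
  rw [Finset.mul_sum]
  apply Finset.sum_congr rfl
  intro u _
  simp only [Equiv.coe_mulLeft, Subgroup.coe_mul, map_mul, mul_assoc, mul_ite, mul_zero,
    mul_right_inj]


lemma tensorChar_conj_u (hZ : Z ≤ Subgroup.center G) (hZU : Z ⊓ U = ⊥)
    (hcop : Nat.Coprime (Fintype.card Z) (Fintype.card U))
    (φ' : U →* ℂ) (ν ν' : Z →* ℂ) (u : U) (t : G) :
    tensorChar Z U ν φ' (t * u * t⁻¹) = tensorChar Z U ν' φ' (t * u * t⁻¹) := by
  by_cases h : ∃ (z₁ : Z) (u₁ : U), (z₁ : G) * u₁ = t * u * t⁻¹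
  · obtain ⟨z₁, u₁, he⟩ := h
    have hcomm : Commute (z₁ : G) (u₁ : G) :=
      ((Subgroup.mem_center_iff.mp (hZ z₁.2)) ↑u₁).symm
    have hu1 : (u₁ : G) ^ Fintype.card U = 1 := by
      have : u₁ ^ Fintype.card U = 1 := pow_card_eq_one
      exact_mod_cast congrArg (Subtype.val) this
    have hu0 : (u : G) ^ Fintype.card U = 1 := by
      have : u ^ Fintype.card U = 1 := pow_card_eq_one
      exact_mod_cast congrArg (Subtype.val) this
    have hz1 : (z₁ : G) ^ Fintype.card U = 1 := by
      have h1 : ((z₁ : G) * u₁) ^ Fintype.card U = 1 := by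
        rw [he, conj_pow, hu0, mul_one, mul_inv_cancel]
      rwa [hcomm.mul_pow, hu1, mul_one] at h1
    have hz1' : z₁ ^ Fintype.card U = 1 := by
      ext
      push_cast [hz1]
      rfl
    have hone : z₁ = 1 := by
      rw [← orderOf_eq_one_iff]
      have d1 : orderOf z₁ ∣ Fintype.card Z := orderOf_dvd_card
      have d2 : orderOf z₁ ∣ Fintype.card U := orderOf_dvd_of_pow_eq_one hz1'
      exact Nat.dvd_one.mp (hcop ▸ Nat.dvd_gcd d1 d2)
    rw [← he, hone, tensorChar_apply Z U hZU, tensorChar_apply Z U hZU, map_one, map_one]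
  · rw [tensorChar_eq_zero Z U ν φ' h, tensorChar_eq_zero Z U ν' φ' h]

lemma key_lemma (hZ : Z ≤ Subgroup.center G) (hZU : Z ⊓ U = ⊥)
    (hcop : Nat.Coprime (Fintype.card Z) (Fintype.card U))
    (φ φ' : U →* ℂ) (ν ν' : Z →* ℂ) (a t : G) :
    tensorChar Z U ν φ a * (starRingEnd ℂ) (tensorChar Z U ν φ' (t * a * t⁻¹)) =
      tensorChar Z U ν' φ a * (starRingEnd ℂ) (tensorChar Z U ν' φ' (t * a * t⁻¹)) := by
  by_cases h : ∃ (z : Z) (u : U), (z : G) * u = a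
  · obtain ⟨z, u, rfl⟩ := h
    have hc : t * ((z : G) * u) * t⁻¹ = (z : G) * (t * u * t⁻¹) := by
      have hz := (Subgroup.mem_center_iff.mp (hZ z.2)) t
      simp only [← mul_assoc, hz]
    rw [hc, tensorChar_apply Z U hZU, tensorChar_apply Z U hZU,
      tensorChar_smul, tensorChar_smul,
      tensorChar_conj_u Z U hZ hZU hcop φ' ν ν' u t]
    rw [map_mul, map_mul]
    have h1 := char_mul_conj Z ν z
    have h2 := char_mul_conj Z ν' z
    linear_combination (φ u * (starRingEnd ℂ) (tensorChar Z U ν' φ' (t * ↑u * t⁻¹))) * h1 -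
      (φ u * (starRingEnd ℂ) (tensorChar Z U ν' φ' (t * ↑u * t⁻¹))) * h2
  · rw [tensorChar_eq_zero Z U ν φ h, tensorChar_eq_zero Z U ν' φ h, zero_mul, zero_mul]

end AuxLemmas

/-- The inner product `⟨Ind_{ZU}^G(ν ⊗ φ), Ind_{ZU}^G(ν ⊗ φ')⟩_G` does not depend on the
linear character `ν` of `Z`. -/
theorem stmt4 {G : Type*} [Group G] [Fintype G] (Z U : Subgroup G)
    (hZ : Z ≤ Subgroup.center G) (hZU : Z ⊓ U = ⊥)
    (hcop : Nat.Coprime (Fintype.card Z) (Fintype.card U))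
    (φ φ' : U →* ℂ) (ν ν' : Z →* ℂ) :
    innerSub ⊤ (indChar (Z ⊔ U) (tensorChar Z U ν φ)) (indChar (Z ⊔ U) (tensorChar Z U ν φ')) =
      innerSub ⊤ (indChar (Z ⊔ U) (tensorChar Z U ν' φ))
        (indChar (Z ⊔ U) (tensorChar Z U ν' φ')) := by
  have key := key_lemma Z U hZ hZU hcop φ φ' ν ν'
  unfold innerSub indChar
  congr 1
  apply Finset.sum_congr rfl
  intro x _
  have main : (∑ a : G, tensorChar Z U ν φ (a * ↑x * a⁻¹)) *
      (starRingEnd ℂ) (∑ b : G, tensorChar Z U ν φ' (b * ↑x * b⁻¹)) =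
      (∑ a : G, tensorChar Z U ν' φ (a * ↑x * a⁻¹)) *
      (starRingEnd ℂ) (∑ b : G, tensorChar Z U ν' φ' (b * ↑x * b⁻¹)) := by
    rw [map_sum, map_sum, Finset.sum_mul_sum, Finset.sum_mul_sum]
    apply Finset.sum_congr rfl
    intro a _
    apply Finset.sum_congr rfl
    intro b _
    have hba : (b * a⁻¹) * (a * ↑x * a⁻¹) * (b * a⁻¹)⁻¹ = b * ↑x * b⁻¹ := by group
    have hk := key (a * ↑x * a⁻¹) (b * a⁻¹)
    rwa [hba] at hk
  rw [map_mul, map_mul]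
  linear_combination (((Fintype.card ↥(Z ⊔ U) : ℂ))⁻¹ *
    (starRingEnd ℂ) (((Fintype.card ↥(Z ⊔ U) : ℂ))⁻¹)) * main
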